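/- arXiv:1907.03024 — 3 statements merged into one kernel-verified Lean document; each statement's English description precedes it below -/
import Mathlib

section
/- Let X be a Hausdorff topological space, let f ∈ Homeo(X), and let x ∈ X with f(x) ≠ x. Then there exists an open neighborhood V of x such that for every γ ∈ Homeo(X) with γ ≠ id and Supp(γ) ⊆ V, the maps γ and f do not commute, i.e. γ ∘ f ≠ f ∘ γ. -/
open Set Topology

/-- The support of a homeomorphism: the closure of the set of non-fixed points. -/
def Supp {X : Type*} [TopologicalSpace X] (f : X ≃ₜ X) : Set X := closure {x | f x ≠ x}

theorem small_support_noncommuting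
    {X : Type*} [TopologicalSpace X] [T2Space X]
    (f : X ≃ₜ X) (x : X) (hx : f x ≠ x) :
    ∃ V : Set X, IsOpen V ∧ x ∈ V ∧
      ∀ γ : X ≃ₜ X, γ ≠ Homeomorph.refl X → Supp γ ⊆ V →
        (γ : X → X) ∘ (f : X → X) ≠ (f : X → X) ∘ (γ : X → X) := by
  obtain ⟨U, W, hU, hW, hxU, hfxW, hUW⟩ := t2_separation hx.symm
  refine ⟨U ∩ f ⁻¹' W, hU.inter (f.continuous.isOpen_preimage W hW),
    ⟨hxU, hfxW⟩, ?_⟩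
  intro γ hγ hsupp hcomm
  -- find a moved point
  have : ∃ y, γ y ≠ y := by
    by_contra h
    push_neg at h
    exact hγ (Homeomorph.ext h)
  obtain ⟨y, hy⟩ := this
  have hyV : y ∈ U ∩ f ⁻¹' W := hsupp (subset_closure hy)
  -- f y ∉ V since f y ∈ W and U ∩ W = ∅
  have hfyV : f y ∉ U ∩ f ⁻¹' W := by
    intro ⟨h1, _⟩
    exact (Set.disjoint_left.mp hUW h1) hyV.2
  -- γ fixes f y
  have hfix : γ (f y) = f y := by
    by_contra h
    exact hfyV (hsupp (subset_closure h))
  have := congrFun hcomm y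
  simp only [Function.comp_apply] at this
  rw [hfix] at this
  exact hy (f.injective this.symm)
end

section
/- Let X be a Hausdorff topological space without isolated points, let f ∈ Homeo(X), and let x ∈ X with f(x) ≠ x. Then there exists an open neighborhood V of x such that for every γ ∈ Homeo(X) with γ(X ∖ V) ⊆ V, the maps f and γ ∘ f ∘ γ⁻¹ do not commute, i.e. f ∘ (γ ∘ f ∘ γ⁻¹) ≠ (γ ∘ f ∘ γ⁻¹) ∘ f. -/
open Set Topology

theorem contraction_noncommuting
    {X : Type*} [TopologicalSpace X] [T2Space X]
    (hX : ∀ x : X, ¬ IsOpen ({x} : Set X))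
    (f : X ≃ₜ X) (x : X) (hx : f x ≠ x) :
    ∃ V : Set X, IsOpen V ∧ x ∈ V ∧
      ∀ γ : X ≃ₜ X, γ '' Vᶜ ⊆ V →
        (f : X → X) ∘ ((γ : X → X) ∘ (f : X → X) ∘ (γ.symm : X → X)) ≠
          ((γ : X → X) ∘ (f : X → X) ∘ (γ.symm : X → X)) ∘ (f : X → X) := by
  -- Separate f x from x
  obtain ⟨u, v, hu, hv, hfxu, hxv, huv⟩ := t2_separation hx
  -- U : open nbhd of x with f(U) ∩ U = ∅
  set U : Set X := v ∩ f ⁻¹' u with hUdef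
  have hUopen : IsOpen U := hv.inter (hu.preimage f.continuous)
  have hxU : x ∈ U := ⟨hxv, hfxu⟩
  have hfU : ∀ p ∈ U, f p ∉ U := by
    intro p hp hfp
    exact (huv.le_bot ⟨hp.2, hfp.1⟩ : False)
  -- a second point y ∈ U, y ≠ x
  obtain ⟨y, hyU, hyx⟩ : ∃ y ∈ U, y ≠ x := by
    by_contra h
    push_neg at h
    have : U = {x} := Set.eq_singleton_iff_unique_mem.mpr ⟨hxU, h⟩
    exact hX x (this ▸ hUopen)
  -- separate x from y inside U
  obtain ⟨A, B, hA, hB, hxA, hyB, hAB⟩ := t2_separation hyx.symm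
  refine ⟨U ∩ A, hUopen.inter hA, ⟨hxU, hxA⟩, ?_⟩
  intro γ hγ heq
  set V : Set X := U ∩ A with hVdef
  have hVU : V ⊆ U := Set.inter_subset_left
  have hyV : y ∉ V := fun h => hAB.le_bot ⟨h.2, hyB⟩
  -- commuting pointwise
  have hc : ∀ p, f (γ (f (γ.symm p))) = γ (f (γ.symm (f p))) := fun p => congrFun heq p
  -- γ.symm maps Vᶜ into V
  have hγs : ∀ p, p ∉ V → γ.symm p ∈ V := by
    intro p hp
    by_contra h
    exact hp (hγ ⟨γ.symm p, h, γ.apply_symm_apply p⟩)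
  -- g = γ f γ⁻¹ maps Vᶜ into V
  have stepA : ∀ p, p ∉ V → γ (f (γ.symm p)) ∈ V := by
    intro p hp
    have h1 : γ.symm p ∈ V := hγs p hp
    have h2 : f (γ.symm p) ∉ V := fun h => hfU _ (hVU h1) (hVU h)
    exact hγ ⟨f (γ.symm p), h2, rfl⟩
  -- hence f maps Vᶜ into V
  have stepB : ∀ p, p ∉ V → f p ∈ V := by
    intro p hp
    by_contra hfp
    have h1 : γ (f (γ.symm (f p))) ∈ V := stepA _ hfp
    rw [← hc p] at h1
    have h2 : γ (f (γ.symm p)) ∈ V := stepA p hp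
    exact hfU _ (hVU h2) (hVU h1)
  -- contradiction at y
  exact hfU y hyU (hVU (stepB y hyV))
end

section
/- Let X be a topological space, let f ∈ Homeo(X), and let x ∈ X with x ∉ Supp(f). Then there exists an open neighborhood V of x such that for every γ ∈ Homeo(X) with γ(X ∖ V) ⊆ V, the maps f and γ ∘ f ∘ γ⁻¹ commute, i.e. f ∘ (γ ∘ f ∘ γ⁻¹) = (γ ∘ f ∘ γ⁻¹) ∘ f. -/
open Set Topology

lemma fix_of_not_mem_Supp {X : Type*} [TopologicalSpace X] (f : X ≃ₜ X) {y : X}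
    (hy : y ∉ Supp f) : f y = y := by
  by_contra h
  exact hy (subset_closure h)

lemma Supp_mapsTo {X : Type*} [TopologicalSpace X] (f : X ≃ₜ X) :
    Set.MapsTo f (Supp f) (Supp f) := by
  have himg : f '' {x | f x ≠ x} = {x | f x ≠ x} := by
    ext z
    constructor
    · rintro ⟨w, hw, rfl⟩
      simpa using fun h => hw (f.injective h)
    · intro hz
      refine ⟨f.symm z, ?_, f.apply_symm_apply z⟩
      simp only [Set.mem_setOf_eq, f.apply_symm_apply]
      intro h
      exact hz (by nth_rewrite 1 [h]; simp)
  have := image_closure_subset_closure_image (f := (f : X → X)) f.continuous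
      (s := {x | f x ≠ x})
  rw [himg] at this
  intro y hy
  exact this ⟨y, hy, rfl⟩

theorem contraction_commuting
    {X : Type*} [TopologicalSpace X]
    (f : X ≃ₜ X) (x : X) (hx : x ∉ Supp f) :
    ∃ V : Set X, IsOpen V ∧ x ∈ V ∧
      ∀ γ : X ≃ₜ X, γ '' Vᶜ ⊆ V →
        (f : X → X) ∘ ((γ : X → X) ∘ (f : X → X) ∘ (γ.symm : X → X)) =
          ((γ : X → X) ∘ (f : X → X) ∘ (γ.symm : X → X)) ∘ (f : X → X) := by
  refine ⟨(Supp f)ᶜ, isClosed_closure.isOpen_compl, hx, ?_⟩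
  intro γ hγ
  rw [compl_compl] at hγ
  -- hγ : γ '' Supp f ⊆ (Supp f)ᶜ
  have hmove : ∀ y : X, y ∈ Supp f → γ y ∉ Supp f := fun y hy => hγ ⟨y, hy, rfl⟩
  have hsymm : ∀ y : X, y ∈ Supp f → γ.symm y ∉ Supp f := by
    intro y hy h
    exact hmove _ h (by simpa using hy)
  funext y
  simp only [Function.comp_apply]
  by_cases hy : y ∈ Supp f
  · have h1 : γ.symm y ∉ Supp f := hsymm y hy
    have h2 : f (γ.symm y) = γ.symm y := fix_of_not_mem_Supp f h1
    have h3 : f y ∈ Supp f := Supp_mapsTo f hy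
    have h4 : γ.symm (f y) ∉ Supp f := hsymm _ h3
    rw [h2, γ.apply_symm_apply, fix_of_not_mem_Supp f h4, γ.apply_symm_apply]
  · have h0 : f y = y := fix_of_not_mem_Supp f hy
    rw [h0]
    by_cases h1 : γ.symm y ∈ Supp f
    · have : f (γ.symm y) ∈ Supp f := Supp_mapsTo f h1
      exact fix_of_not_mem_Supp f (hmove _ this)
    · rw [fix_of_not_mem_Supp f h1, γ.apply_symm_apply, h0]
end
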